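/- arXiv:math/0304352 — 2 statements merged into one kernel-verified Lean document; each statement's English description precedes it below -/
import Mathlib

section
/- Let F(x,y) ∈ 𝔬[[x,y]] be a (p-1)-lacunary formal group law, i.e., F = ∑_{j≥0} H_j with each H_j homogeneous of degree 1 + j(p-1). Let 𝔒 be an 𝔬-algebra and λ ∈ 𝔒. Then the λ-blowup F^{(λ)} = ∑_{j≥0} λ^j H_j is again a formal group law over 𝔒. -/
open MvPowerSeries

/-- Substitution of the family `g : σ → R[[τ]]` of power series (each of positive
order) into the multivariable power series `f ∈ R[[σ]]`: since each `g i` has no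
constant term, the coefficient of a monomial `m` in `f(g)` only involves the
monomials of `f` of total degree at most `|m|`, so it is given by a finite sum. -/
noncomputable def msubst {σ τ R : Type*} [Fintype σ] [DecidableEq σ] [CommRing R]
    (f : MvPowerSeries σ R) (g : σ → MvPowerSeries τ R) : MvPowerSeries τ R :=
  fun m =>
    ∑ d ∈ Finset.Iic (Finsupp.equivFunOnFinite.symm
        (fun _ : σ => m.sum fun _ v => v)),
      MvPowerSeries.coeff d f * MvPowerSeries.coeff m (∏ i, g i ^ d i)

/-- `F ∈ R[[x,y]]` is a formal group law: `F(x,0) = x`, `F(0,y) = y`, and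
`F(F(x,y),z) = F(x,F(y,z))`. -/
def IsFormalGroupLaw {R : Type*} [CommRing R] (F : MvPowerSeries (Fin 2) R) : Prop :=
  msubst F ![(X 0 : MvPowerSeries (Fin 2) R), 0] = X 0 ∧
  msubst F ![(0 : MvPowerSeries (Fin 2) R), X 1] = X 1 ∧
  msubst F ![msubst F ![(X 0 : MvPowerSeries (Fin 3) R), X 1], X 2] =
    msubst F ![(X 0 : MvPowerSeries (Fin 3) R), msubst F ![X 1, X 2]]

/-- Composition `f ∘ g` of one-variable power series, `g` having positive order. -/
noncomputable def scomp {R : Type*} [CommRing R] (f g : PowerSeries R) :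
    PowerSeries R :=
  msubst f (fun _ : Unit => g)

/-- `g` is an endomorphism of the formal group law `F`: `g` has no constant term
and `g(F(x,y)) = F(g(x), g(y))`. -/
def IsEndoOf {R : Type*} [CommRing R] (g : PowerSeries R)
    (F : MvPowerSeries (Fin 2) R) : Prop :=
  PowerSeries.constantCoeff g = 0 ∧
  msubst g (fun _ : Unit => F) =
    msubst F ![msubst g (fun _ : Unit => (X 0 : MvPowerSeries (Fin 2) R)),
      msubst g (fun _ : Unit => (X 1 : MvPowerSeries (Fin 2) R))]

/-- A power series is `(p-1)`-lacunary if its only (possibly) nonzero homogeneous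
components are in degrees `≡ 1 mod (p-1)`, i.e. of the form `1 + j(p-1)`. -/
def Lacunary (p : ℕ) {σ R : Type*} [CommRing R] (F : MvPowerSeries σ R) : Prop :=
  ∀ m : σ →₀ ℕ, MvPowerSeries.coeff m F ≠ 0 →
    ∃ j : ℕ, (m.sum fun _ v => v) = 1 + j * (p - 1)

/-- The `λ`-blowup of a `(p-1)`-lacunary power series `G = ∑_j H_j` (with `H_j`
homogeneous of degree `1 + j(p-1)`), namely `G^{(λ)} = ∑_j λ^j H_j`. -/
noncomputable def blowup (p : ℕ) {σ R : Type*} [CommRing R] (lam : R)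
    (F : MvPowerSeries σ R) : MvPowerSeries σ R :=
  fun m =>
    lam ^ (((m.sum fun _ v => v) - 1) / (p - 1)) * MvPowerSeries.coeff m F

section BlowupAux

variable {τ R : Type*} [CommRing R]

lemma coeff_msubst {σ : Type*} [Fintype σ] [DecidableEq σ]
    (f : MvPowerSeries σ R) (g : σ → MvPowerSeries τ R) (m : τ →₀ ℕ) :
    MvPowerSeries.coeff m (msubst f g) =
      ∑ d ∈ Finset.Iic (Finsupp.equivFunOnFinite.symm
          (fun _ : σ => m.sum fun _ v => v)),
        MvPowerSeries.coeff d f * MvPowerSeries.coeff m (∏ i, g i ^ d i) := rfl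

lemma coeff_blowup (p : ℕ) (lam : R) (A : MvPowerSeries τ R) (m : τ →₀ ℕ) :
    MvPowerSeries.coeff m (blowup p lam A) =
      lam ^ (((m.sum fun _ v => v) - 1) / (p - 1)) * MvPowerSeries.coeff m A := rfl

lemma tdeg_add (u v : τ →₀ ℕ) :
    ((u + v).sum fun _ n => n) = (u.sum fun _ n => n) + (v.sum fun _ n => n) :=
  Finsupp.sum_add_index' (fun _ => rfl) (fun _ _ _ => rfl)

def SHom (q k : ℕ) (A : MvPowerSeries τ R) : Prop :=
  ∀ m : τ →₀ ℕ, MvPowerSeries.coeff m A ≠ 0 →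
    k ≤ (m.sum fun _ v => v) ∧ q ∣ (m.sum fun _ v => v) - k

def SScale (q k : ℕ) (lam : R) (A B : MvPowerSeries τ R) : Prop :=
  ∀ m : τ →₀ ℕ, MvPowerSeries.coeff m B =
    lam ^ (((m.sum fun _ v => v) - k) / q) * MvPowerSeries.coeff m A

lemma div_add_div_aux {q k k' a b : ℕ} (hk : k ≤ a) (hk' : k' ≤ b)
    (h1 : q ∣ a - k) (h2 : q ∣ b - k') :
    (a - k) / q + (b - k') / q = (a + b - (k + k')) / q := by
  rcases Nat.eq_zero_or_pos q with hq | hq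
  · subst hq
    simp only [Nat.zero_dvd] at h1 h2
    simp [h1, h2]
  · obtain ⟨x, hx⟩ := h1
    obtain ⟨y, hy⟩ := h2
    have h : a + b - (k + k') = (a - k) + (b - k') := by omega
    rw [h, hx, hy, ← mul_add, Nat.mul_div_cancel_left _ hq,
      Nat.mul_div_cancel_left _ hq, Nat.mul_div_cancel_left _ hq]

lemma SHom.mul [DecidableEq τ] {q k k' : ℕ} {A A' : MvPowerSeries τ R}
    (hA : SHom q k A) (hA' : SHom q k' A') : SHom q (k + k') (A * A') := by
  intro m hm
  rw [MvPowerSeries.coeff_mul] at hm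
  obtain ⟨uv, huv, hne⟩ := Finset.exists_ne_zero_of_sum_ne_zero hm
  rw [Finset.HasAntidiagonal.mem_antidiagonal] at huv
  obtain ⟨hu1, hu2⟩ := hA uv.1 (left_ne_zero_of_mul hne)
  obtain ⟨hv1, hv2⟩ := hA' uv.2 (right_ne_zero_of_mul hne)
  rw [← huv, tdeg_add]
  refine ⟨by omega, ?_⟩
  have h : (uv.1.sum fun _ v => v) + (uv.2.sum fun _ v => v) - (k + k')
      = ((uv.1.sum fun _ v => v) - k) + ((uv.2.sum fun _ v => v) - k') := by omega
  rw [h]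
  exact dvd_add hu2 hv2

lemma SScale.mul [DecidableEq τ] {q k k' : ℕ} {lam : R} {A A' B B' : MvPowerSeries τ R}
    (hA : SHom q k A) (hA' : SHom q k' A')
    (hB : SScale q k lam A B) (hB' : SScale q k' lam A' B') :
    SScale q (k + k') lam (A * A') (B * B') := by
  intro m
  rw [MvPowerSeries.coeff_mul, MvPowerSeries.coeff_mul, Finset.mul_sum]
  refine Finset.sum_congr rfl fun uv huv => ?_
  rw [Finset.HasAntidiagonal.mem_antidiagonal] at huv
  rw [hB uv.1, hB' uv.2, mul_mul_mul_comm]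
  by_cases hz : MvPowerSeries.coeff uv.1 A * MvPowerSeries.coeff uv.2 A' = 0
  · rw [hz, mul_zero, mul_zero]
  · obtain ⟨hu1, hu2⟩ := hA uv.1 (left_ne_zero_of_mul hz)
    obtain ⟨hv1, hv2⟩ := hA' uv.2 (right_ne_zero_of_mul hz)
    rw [← pow_add, div_add_div_aux hu1 hv1 hu2 hv2, ← tdeg_add, huv]

lemma shom_one [DecidableEq τ] (q : ℕ) : SHom q 0 (1 : MvPowerSeries τ R) := by
  intro m hm
  rcases eq_or_ne m 0 with h | h
  · subst h; simp
  · exact absurd (by simp [MvPowerSeries.coeff_one, h]) hm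

lemma sscale_one [DecidableEq τ] (q : ℕ) (lam : R) :
    SScale q 0 lam (1 : MvPowerSeries τ R) 1 := by
  intro m
  rcases eq_or_ne m 0 with h | h
  · subst h; simp
  · rw [MvPowerSeries.coeff_one, if_neg h, mul_zero]

lemma SHom.pow [DecidableEq τ] {q k : ℕ} {A : MvPowerSeries τ R}
    (hA : SHom q k A) (n : ℕ) : SHom q (n * k) (A ^ n) := by
  induction n with
  | zero => simpa using shom_one q
  | succ n ih =>
      rw [pow_succ]
      simpa [Nat.succ_mul] using ih.mul hA

lemma SScale.pow [DecidableEq τ] {q k : ℕ} {lam : R} {A B : MvPowerSeries τ R}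
    (hA : SHom q k A) (hB : SScale q k lam A B) (n : ℕ) :
    SScale q (n * k) lam (A ^ n) (B ^ n) := by
  induction n with
  | zero => simpa using sscale_one q lam
  | succ n ih =>
      rw [pow_succ, pow_succ]
      simpa [Nat.succ_mul] using SScale.mul (hA.pow n) hA ih hB

lemma shom_prod {σ : Type*} [DecidableEq τ] {q : ℕ} {g : σ → MvPowerSeries τ R}
    (hg : ∀ i, SHom q 1 (g i)) (d : σ → ℕ) (s : Finset σ) :
    SHom q (∑ i ∈ s, d i) (∏ i ∈ s, g i ^ d i) := by
  classical
  induction s using Finset.induction_on with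
  | empty => simpa using shom_one q
  | insert _ _ h ih =>
      rw [Finset.prod_insert h, Finset.sum_insert h]
      simpa using ((hg _).pow (d _)).mul ih

lemma sscale_prod {σ : Type*} [DecidableEq τ] {q : ℕ} {lam : R}
    {g h : σ → MvPowerSeries τ R}
    (hg : ∀ i, SHom q 1 (g i)) (hgh : ∀ i, SScale q 1 lam (g i) (h i))
    (d : σ → ℕ) (s : Finset σ) :
    SScale q (∑ i ∈ s, d i) lam (∏ i ∈ s, g i ^ d i) (∏ i ∈ s, h i ^ d i) := by
  classical
  induction s using Finset.induction_on with
  | empty => simpa using sscale_one q lam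
  | insert _ _ h ih =>
      rw [Finset.prod_insert h, Finset.prod_insert h, Finset.sum_insert h]
      simpa using SScale.mul ((hg _).pow (d _)) (shom_prod hg d _)
        (SScale.pow (hg _) (hgh _) (d _)) ih

lemma Lacunary.shom {p : ℕ} {A : MvPowerSeries τ R} (hA : Lacunary p A) :
    SHom (p - 1) 1 A := by
  intro m hm
  obtain ⟨j, hj⟩ := hA m hm
  refine ⟨hj ▸ Nat.le_add_right 1 _, ⟨j, ?_⟩⟩
  rw [hj]
  simp [mul_comm]

lemma sscale_blowup (p : ℕ) (lam : R) (A : MvPowerSeries τ R) :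
    SScale (p - 1) 1 lam A (blowup p lam A) := fun _ => rfl

end BlowupAux
section BlowupMain

variable {τ R : Type*} [CommRing R]

lemma msubst_blowup {σ : Type*} [Fintype σ] [DecidableEq σ] [DecidableEq τ]
    (p : ℕ) (lam : R) (G : MvPowerSeries σ R) (hG : Lacunary p G)
    (g : σ → MvPowerSeries τ R) (hg : ∀ i, Lacunary p (g i)) :
    msubst (blowup p lam G) (fun i => blowup p lam (g i))
      = blowup p lam (msubst G g) := by
  apply MvPowerSeries.ext
  intro m
  rw [coeff_msubst, coeff_blowup, coeff_msubst, Finset.mul_sum]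
  refine Finset.sum_congr rfl fun d _ => ?_
  rw [sscale_blowup p lam G d,
    sscale_prod (fun i => (hg i).shom) (fun i => sscale_blowup p lam (g i))
      (fun i => d i) Finset.univ m, mul_mul_mul_comm]
  by_cases hz : MvPowerSeries.coeff d G
      * MvPowerSeries.coeff m (∏ i, g i ^ d i) = 0
  · rw [hz, mul_zero, mul_zero]
  · obtain ⟨hd1, hd2⟩ := hG.shom d (left_ne_zero_of_mul hz)
    obtain ⟨hm1, hm2⟩ := shom_prod (fun i => (hg i).shom) (fun i => d i)
      Finset.univ m (right_ne_zero_of_mul hz)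
    have hdeq : (d.sum fun _ v => v) = ∑ i, (d i : ℕ) :=
      Finsupp.sum_fintype _ _ fun _ => rfl
    rw [← hdeq] at hm1 hm2
    rw [← pow_add]
    congr 1
    rcases Nat.eq_zero_or_pos (p - 1) with hq | hq
    · simp [hq]
    · obtain ⟨x, hx⟩ := hd2
      obtain ⟨y, hy⟩ := hm2
      have h : (m.sum fun _ v => v) - 1
          = ((d.sum fun _ v => v) - 1) + ((m.sum fun _ v => v) - (d.sum fun _ v => v)) := by
        omega
      rw [← hdeq, h, hx, hy, ← mul_add, Nat.mul_div_cancel_left _ hq,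
        Nat.mul_div_cancel_left _ hq, Nat.mul_div_cancel_left _ hq]

lemma lacunary_msubst {σ : Type*} [Fintype σ] [DecidableEq σ] [DecidableEq τ]
    {p : ℕ} {G : MvPowerSeries σ R} (hG : Lacunary p G)
    {g : σ → MvPowerSeries τ R} (hg : ∀ i, Lacunary p (g i)) :
    Lacunary p (msubst G g) := by
  intro m hm
  rw [coeff_msubst] at hm
  obtain ⟨d, _, hne⟩ := Finset.exists_ne_zero_of_sum_ne_zero hm
  obtain ⟨hd1, hd2⟩ := hG.shom d (left_ne_zero_of_mul hne)
  obtain ⟨hm1, hm2⟩ := shom_prod (fun i => (hg i).shom) (fun i => d i)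
    Finset.univ m (right_ne_zero_of_mul hne)
  have hdeq : (d.sum fun _ v => v) = ∑ i, (d i : ℕ) :=
    Finsupp.sum_fintype _ _ fun _ => rfl
  rw [← hdeq] at hm1 hm2
  obtain ⟨x, hx⟩ := hd2
  obtain ⟨y, hy⟩ := hm2
  exact ⟨x + y, by rw [add_mul, mul_comm x, mul_comm y]; omega⟩

lemma lacunary_blowup (p : ℕ) (lam : R) (A : MvPowerSeries τ R)
    (hA : Lacunary p A) : Lacunary p (blowup p lam A) := by
  intro m hm
  refine hA m fun h => hm ?_
  rw [coeff_blowup, h, mul_zero]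

lemma lacunary_X [DecidableEq τ] (p : ℕ) (i : τ) :
    Lacunary p (MvPowerSeries.X i : MvPowerSeries τ R) := by
  intro m hm
  rw [MvPowerSeries.coeff_X] at hm
  split at hm
  · next h => exact ⟨0, by subst h; simp [Finsupp.sum_single_index]⟩
  · exact absurd rfl hm

lemma lacunary_zero (p : ℕ) : Lacunary p (0 : MvPowerSeries τ R) := by
  intro m hm
  simp at hm

lemma blowup_X [DecidableEq τ] (p : ℕ) (lam : R) (i : τ) :
    blowup p lam (MvPowerSeries.X i : MvPowerSeries τ R) = MvPowerSeries.X i := by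
  apply MvPowerSeries.ext
  intro m
  rw [coeff_blowup, MvPowerSeries.coeff_X]
  split
  · next h => subst h; simp [Finsupp.sum_single_index]
  · rw [mul_zero]

lemma blowup_zero (p : ℕ) (lam : R) :
    blowup p lam (0 : MvPowerSeries τ R) = 0 := by
  apply MvPowerSeries.ext
  intro m
  rw [coeff_blowup, map_zero, mul_zero]

lemma msubst_map {S : Type*} [CommRing S] {σ : Type*} [Fintype σ] [DecidableEq σ]
    (f : R →+* S) (G : MvPowerSeries σ R) (g : σ → MvPowerSeries τ R) :
    msubst (MvPowerSeries.map f G) (fun i => MvPowerSeries.map f (g i))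
      = MvPowerSeries.map f (msubst G g) := by
  apply MvPowerSeries.ext
  intro m
  rw [MvPowerSeries.coeff_map, coeff_msubst, coeff_msubst, map_sum]
  refine Finset.sum_congr rfl fun d _ => ?_
  rw [map_mul, MvPowerSeries.coeff_map]
  congr 1
  rw [show (∏ i, MvPowerSeries.map f (g i) ^ (d i : ℕ))
      = MvPowerSeries.map f (∏ i, g i ^ (d i : ℕ)) by
    rw [map_prod]
    exact Finset.prod_congr rfl fun i _ => (map_pow _ _ _).symm]
  rw [MvPowerSeries.coeff_map]

lemma lacunary_map {S : Type*} [CommRing S] {σ : Type*} {p : ℕ}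
    (f : R →+* S) {F : MvPowerSeries σ R} (hF : Lacunary p F) :
    Lacunary p (MvPowerSeries.map f F) := by
  intro m hm
  refine hF m fun h => hm ?_
  rw [MvPowerSeries.coeff_map, h, map_zero]

end BlowupMain

section FGLTransport

open MvPowerSeries

lemma isFGL_map {R S : Type*} [CommRing R] [CommRing S] (f : R →+* S)
    {F : MvPowerSeries (Fin 2) R} (hF : IsFormalGroupLaw F) :
    IsFormalGroupLaw (MvPowerSeries.map f F) := by
  obtain ⟨h1, h2, h3⟩ := hF
  refine ⟨?_, ?_, ?_⟩
  · have e : ![(X 0 : MvPowerSeries (Fin 2) S), 0]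
        = fun i => MvPowerSeries.map f
            (![(X 0 : MvPowerSeries (Fin 2) R), 0] i) := by
      funext i; fin_cases i <;> simp [MvPowerSeries.map_X]
    rw [e, msubst_map, h1, MvPowerSeries.map_X]
  · have e : ![(0 : MvPowerSeries (Fin 2) S), X 1]
        = fun i => MvPowerSeries.map f
            (![(0 : MvPowerSeries (Fin 2) R), X 1] i) := by
      funext i; fin_cases i <;> simp [MvPowerSeries.map_X]
    rw [e, msubst_map, h2, MvPowerSeries.map_X]
  · have e01 : msubst (MvPowerSeries.map f F)
        ![(X 0 : MvPowerSeries (Fin 3) S), X 1]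
        = MvPowerSeries.map f (msubst F ![X 0, X 1]) := by
      rw [show ![(X 0 : MvPowerSeries (Fin 3) S), X 1]
          = fun i => MvPowerSeries.map f
              (![(X 0 : MvPowerSeries (Fin 3) R), X 1] i) by
        funext i; fin_cases i <;> simp [MvPowerSeries.map_X], msubst_map]
    have e12 : msubst (MvPowerSeries.map f F)
        ![(X 1 : MvPowerSeries (Fin 3) S), X 2]
        = MvPowerSeries.map f (msubst F ![X 1, X 2]) := by
      rw [show ![(X 1 : MvPowerSeries (Fin 3) S), X 2]
          = fun i => MvPowerSeries.map f
              (![(X 1 : MvPowerSeries (Fin 3) R), X 2] i) by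
        funext i; fin_cases i <;> simp [MvPowerSeries.map_X], msubst_map]
    rw [e01, e12]
    rw [show ![MvPowerSeries.map f (msubst F ![X 0, X 1]),
          (X 2 : MvPowerSeries (Fin 3) S)]
        = fun i => MvPowerSeries.map f
            (![msubst F ![X 0, X 1], X 2] i) by
      funext i; fin_cases i <;> simp [MvPowerSeries.map_X], msubst_map]
    rw [show ![(X 0 : MvPowerSeries (Fin 3) S),
          MvPowerSeries.map f (msubst F ![X 1, X 2])]
        = fun i => MvPowerSeries.map f
            (![X 0, msubst F ![X 1, X 2]] i) by
      funext i; fin_cases i <;> simp [MvPowerSeries.map_X], msubst_map]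
    rw [h3]

lemma isFGL_blowup {R : Type*} [CommRing R] (p : ℕ) (lam : R)
    {F : MvPowerSeries (Fin 2) R} (hlac : Lacunary p F)
    (hF : IsFormalGroupLaw F) : IsFormalGroupLaw (blowup p lam F) := by
  obtain ⟨h1, h2, h3⟩ := hF
  refine ⟨?_, ?_, ?_⟩
  · rw [show ![(X 0 : MvPowerSeries (Fin 2) R), 0]
        = fun i => blowup p lam (![(X 0 : MvPowerSeries (Fin 2) R), 0] i) by
      funext i; fin_cases i <;> simp [blowup_X, blowup_zero],
      msubst_blowup p lam F hlac _
        (by intro i; fin_cases i <;> simp [lacunary_X, lacunary_zero]),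
      h1, blowup_X]
  · rw [show ![(0 : MvPowerSeries (Fin 2) R), X 1]
        = fun i => blowup p lam (![(0 : MvPowerSeries (Fin 2) R), X 1] i) by
      funext i; fin_cases i <;> simp [blowup_X, blowup_zero],
      msubst_blowup p lam F hlac _
        (by intro i; fin_cases i <;> simp [lacunary_X, lacunary_zero]),
      h2, blowup_X]
  · have e01 : msubst (blowup p lam F) ![(X 0 : MvPowerSeries (Fin 3) R), X 1]
        = blowup p lam (msubst F ![X 0, X 1]) := by
      conv_lhs => rw [show ![(X 0 : MvPowerSeries (Fin 3) R), X 1]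
          = fun i => blowup p lam (![(X 0 : MvPowerSeries (Fin 3) R), X 1] i) by
        funext i; fin_cases i <;> simp [blowup_X]]
      rw [msubst_blowup p lam F hlac _
          (by intro i; fin_cases i <;> simp [lacunary_X])]
    have e12 : msubst (blowup p lam F) ![(X 1 : MvPowerSeries (Fin 3) R), X 2]
        = blowup p lam (msubst F ![X 1, X 2]) := by
      conv_lhs => rw [show ![(X 1 : MvPowerSeries (Fin 3) R), X 2]
          = fun i => blowup p lam (![(X 1 : MvPowerSeries (Fin 3) R), X 2] i) by
        funext i; fin_cases i <;> simp [blowup_X]]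
      rw [msubst_blowup p lam F hlac _
          (by intro i; fin_cases i <;> simp [lacunary_X])]
    have hl01 : Lacunary p (msubst F ![(X 0 : MvPowerSeries (Fin 3) R), X 1]) :=
      lacunary_msubst hlac (by intro i; fin_cases i <;> simp [lacunary_X])
    have hl12 : Lacunary p (msubst F ![(X 1 : MvPowerSeries (Fin 3) R), X 2]) :=
      lacunary_msubst hlac (by intro i; fin_cases i <;> simp [lacunary_X])
    rw [e01, e12]
    rw [show ![blowup p lam (msubst F ![X 0, X 1]), (X 2 : MvPowerSeries (Fin 3) R)]
        = fun i => blowup p lam (![msubst F ![X 0, X 1], X 2] i) by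
      funext i; fin_cases i <;> simp [blowup_X],
      msubst_blowup p lam F hlac _
        (by intro i; fin_cases i <;> simp [lacunary_X, hl01])]
    rw [show ![(X 0 : MvPowerSeries (Fin 3) R), blowup p lam (msubst F ![X 1, X 2])]
        = fun i => blowup p lam (![X 0, msubst F ![X 1, X 2]] i) by
      funext i; fin_cases i <;> simp [blowup_X],
      msubst_blowup p lam F hlac _
        (by intro i; fin_cases i <;> simp [lacunary_X, hl12])]
    rw [h3]

end FGLTransport

/-- **The `λ`-blowup of a `(p-1)`-lacunary formal group law is a formal group law.**
Let `F ∈ 𝔬[[x,y]]` be a `(p-1)`-lacunary formal group law, `𝔒` an `𝔬`-algebra and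
`λ ∈ 𝔒`.  Then the `λ`-blowup `F^{(λ)} = ∑_j λ^j H_j` (of the image of `F` in
`𝔒[[x,y]]`) is again a `(p-1)`-lacunary formal group law over `𝔒`. -/
theorem stmt_13 (p : ℕ) [Fact p.Prime]
    (O : Type*) [CommRing O] (F : MvPowerSeries (Fin 2) O)
    (hF : IsFormalGroupLaw F) (hlac : Lacunary p F)
    (O' : Type*) [CommRing O'] [Algebra O O'] (lam : O') :
    IsFormalGroupLaw (blowup p lam (MvPowerSeries.map (algebraMap O O') F)) ∧
    Lacunary p (blowup p lam (MvPowerSeries.map (algebraMap O O') F)) := by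
  have hF' := isFGL_map (algebraMap O O') hF
  have hlac' := lacunary_map (algebraMap O O') hlac
  exact ⟨isFGL_blowup p lam hlac' hF', lacunary_blowup p lam _ hlac'⟩
end

section
/- Let F be a (p-1)-lacunary formal group law over 𝔬 and g(t) = ∑_j c_j t^{1+j(p-1)} a (p-1)-lacunary endomorphism of F. For λ ∈ 𝔒 (an 𝔬-algebra), the λ-blowup g^{(λ)}(t) = ∑_j λ^j c_j t^{1+j(p-1)} is an endomorphism of the blown-up formal group F^{(λ)}, and the map g ↦ g^{(λ)} is a ring homomorphism End_𝔬(F) → End_𝔒(F^{(λ)}) on (p-1)-lacunary endomorphisms, which is injective if λ is a nonzerodivisor in 𝔒. -/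
open MvPowerSeries

namespace Stmt14Aux

def deg {σ : Type*} (m : σ →₀ ℕ) : ℕ := m.sum fun _ v => v

lemma deg_add {σ : Type*} (a b : σ →₀ ℕ) : deg (a + b) = deg a + deg b :=
  Finsupp.sum_add_index' (fun _ => rfl) (fun _ _ _ => rfl)

lemma deg_zero {σ : Type*} : deg (0 : σ →₀ ℕ) = 0 := Finsupp.sum_zero_index

/-- `f'` is obtained from `f` by the `λ`-weighting of shift `s`. -/
def Matched (p : ℕ) {τ R : Type*} [CommRing R] (lam : R) (s : ℕ)
    (f f' : MvPowerSeries τ R) : Prop :=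
  ∀ m : τ →₀ ℕ,
    (MvPowerSeries.coeff m f' =
      lam ^ ((deg m - s) / (p - 1)) * MvPowerSeries.coeff m f) ∧
    (MvPowerSeries.coeff m f ≠ 0 → ∃ j : ℕ, deg m = s + j * (p - 1))

variable {p : ℕ} {R : Type*} [CommRing R] {lam : R}

lemma div_helper (hp : 0 < p - 1) (s j : ℕ) : (s + j * (p - 1) - s) / (p - 1) = j := by
  rw [Nat.add_sub_cancel_left, Nat.mul_div_cancel _ hp]

lemma matched_one {τ : Type*} : Matched p lam 0 (1 : MvPowerSeries τ R) 1 := by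
  intro m
  classical
  constructor
  · rw [MvPowerSeries.coeff_one]
    by_cases h : m = 0
    · subst h; simp [MvPowerSeries.coeff_one, deg_zero]
    · simp [MvPowerSeries.coeff_one, h]
  · intro h
    rw [MvPowerSeries.coeff_one] at h
    refine ⟨0, ?_⟩
    by_cases hm : m = 0
    · subst hm; simp [deg_zero]
    · simp [hm] at h

lemma matched_mul {τ : Type*} (hp : 2 ≤ p) {s t : ℕ} {f f' g g' : MvPowerSeries τ R}
    (hf : Matched p lam s f f') (hg : Matched p lam t g g') :
    Matched p lam (s + t) (f * g) (f' * g') := by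
  classical
  have hp1 : 0 < p - 1 := by omega
  intro m
  constructor
  · rw [MvPowerSeries.coeff_mul, MvPowerSeries.coeff_mul, Finset.mul_sum]
    refine Finset.sum_congr rfl fun q hq => ?_
    have hsum : q.1 + q.2 = m := Finset.HasAntidiagonal.mem_antidiagonal.1 hq
    rw [(hf q.1).1, (hg q.2).1]
    by_cases h1 : MvPowerSeries.coeff q.1 f = 0
    · simp [h1]
    by_cases h2 : MvPowerSeries.coeff q.2 g = 0
    · simp [h2]
    obtain ⟨j, hj⟩ := (hf q.1).2 h1
    obtain ⟨k, hk⟩ := (hg q.2).2 h2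
    have hm : deg m = (s + t) + (j + k) * (p - 1) := by
      rw [← hsum, deg_add, hj, hk, add_mul]; ring
    rw [hj, hk, hm, div_helper hp1, div_helper hp1, div_helper hp1, pow_add]
    ring
  · intro h
    rw [MvPowerSeries.coeff_mul] at h
    obtain ⟨q, hq, hne⟩ := Finset.exists_ne_zero_of_sum_ne_zero h
    have hsum : q.1 + q.2 = m := Finset.HasAntidiagonal.mem_antidiagonal.1 hq
    have h1 : MvPowerSeries.coeff q.1 f ≠ 0 := fun h0 => hne (by rw [h0, zero_mul])
    have h2 : MvPowerSeries.coeff q.2 g ≠ 0 := fun h0 => hne (by rw [h0, mul_zero])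
    obtain ⟨j, hj⟩ := (hf q.1).2 h1
    obtain ⟨k, hk⟩ := (hg q.2).2 h2
    exact ⟨j + k, by rw [← hsum, deg_add, hj, hk, add_mul]; ring⟩

lemma matched_pow {τ : Type*} (hp : 2 ≤ p) {s : ℕ} {f f' : MvPowerSeries τ R}
    (hf : Matched p lam s f f') (n : ℕ) :
    Matched p lam (n * s) (f ^ n) (f' ^ n) := by
  induction n with
  | zero => simpa using (matched_one (p := p) (lam := lam))
  | succ n ih =>
      have := matched_mul hp ih hf
      rw [pow_succ, pow_succ]
      have hns : n * s + s = (n + 1) * s := by ring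
      rwa [hns] at this

lemma matched_prod {τ ι : Type*} (hp : 2 ≤ p) (s : Finset ι) (w : ι → ℕ)
    (f f' : ι → MvPowerSeries τ R)
    (h : ∀ i ∈ s, Matched p lam (w i) (f i) (f' i)) :
    Matched p lam (∑ i ∈ s, w i) (∏ i ∈ s, f i) (∏ i ∈ s, f' i) := by
  classical
  induction s using Finset.induction with
  | empty => simpa using (matched_one (p := p) (lam := lam))
  | insert a s' hnm ih =>
      rw [Finset.sum_insert hnm, Finset.prod_insert hnm, Finset.prod_insert hnm]
      exact matched_mul hp (h a (Finset.mem_insert_self a s'))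
        (ih fun i hi => h i (Finset.mem_insert_of_mem hi))

lemma matched_lacunary {τ : Type*} {f f' : MvPowerSeries τ R}
    (h : Matched p lam 1 f f') : Lacunary p f := fun m hm => by
  obtain ⟨j, hj⟩ := (h m).2 hm
  exact ⟨j, hj⟩

lemma matched_right_eq {τ : Type*} {f f' : MvPowerSeries τ R}
    (h : Matched p lam 1 f f') : f' = blowup p lam f := by
  funext m
  exact (h m).1

lemma lacunary_matched {τ : Type*} {f : MvPowerSeries τ R} (hf : Lacunary p f) :
    Matched p lam 1 f (blowup p lam f) :=
  fun m => ⟨rfl, fun h => hf m h⟩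

lemma matched_X {τ : Type*} [DecidableEq τ] (i : τ) :
    Matched p lam 1 (X i : MvPowerSeries τ R) (X i) := by
  intro m
  constructor
  · rw [MvPowerSeries.coeff_X]
    by_cases h : m = Finsupp.single i 1
    · subst h
      have : deg (Finsupp.single i 1) = 1 := by simp [deg]
      simp [MvPowerSeries.coeff_X, this]
    · simp [MvPowerSeries.coeff_X, h]
  · intro h
    rw [MvPowerSeries.coeff_X] at h
    by_cases hm : m = Finsupp.single i 1
    · subst hm
      exact ⟨0, by simp [deg]⟩
    · simp [hm] at h

lemma matched_msubst {σ τ : Type*} [Fintype σ] [DecidableEq σ] (hp : 2 ≤ p)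
    {f f' : MvPowerSeries σ R} (hf : Matched p lam 1 f f')
    {g g' : σ → MvPowerSeries τ R} (hg : ∀ i, Matched p lam 1 (g i) (g' i)) :
    Matched p lam 1 (msubst f g) (msubst f' g') := by
  classical
  have hp1 : 0 < p - 1 := by omega
  have key : ∀ d : σ →₀ ℕ,
      Matched p lam (deg d) (∏ i, g i ^ d i) (∏ i, g' i ^ d i) := by
    intro d
    have h1 := matched_prod hp Finset.univ (fun i => d i * 1) (fun i => g i ^ d i)
      (fun i => g' i ^ d i) (fun i _ => matched_pow hp (hg i) (d i))
    have h2 : (∑ i : σ, d i * 1) = deg d := by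
      rw [deg, Finsupp.sum_fintype _ _ (fun _ => rfl)]
      simp
    rwa [h2] at h1
  intro m
  have hLHS : MvPowerSeries.coeff m (msubst f g) =
      ∑ d ∈ Finset.Iic (Finsupp.equivFunOnFinite.symm (fun _ : σ => deg m)),
        MvPowerSeries.coeff d f * MvPowerSeries.coeff m (∏ i, g i ^ d i) := rfl
  have hRHS : MvPowerSeries.coeff m (msubst f' g') =
      ∑ d ∈ Finset.Iic (Finsupp.equivFunOnFinite.symm (fun _ : σ => deg m)),
        MvPowerSeries.coeff d f' * MvPowerSeries.coeff m (∏ i, g' i ^ d i) := rfl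
  constructor
  · rw [hLHS, hRHS, Finset.mul_sum]
    refine Finset.sum_congr rfl fun d _ => ?_
    rw [(hf d).1, (key d m).1]
    by_cases h1 : MvPowerSeries.coeff d f = 0
    · simp [h1]
    by_cases h2 : MvPowerSeries.coeff m (∏ i, g i ^ d i) = 0
    · simp [h2]
    obtain ⟨j, hj⟩ := (hf d).2 h1
    obtain ⟨k, hk⟩ := (key d m).2 h2
    have hm : deg m = 1 + (j + k) * (p - 1) := by
      rw [hk, hj, add_mul]; ring
    have e1 : (deg d - 1) / (p - 1) = j := by
      rw [hj, add_comm 1 (j * (p - 1)), Nat.add_sub_cancel, Nat.mul_div_cancel _ hp1]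
    have e2 : (deg m - deg d) / (p - 1) = k := by
      rw [hk]; exact div_helper hp1 _ k
    have e3 : (deg m - 1) / (p - 1) = j + k := by
      rw [hm, add_comm 1 ((j + k) * (p - 1)), Nat.add_sub_cancel,
        Nat.mul_div_cancel _ hp1]
    rw [e1, e2, e3, pow_add]
    ring
  · intro h
    rw [hLHS] at h
    obtain ⟨d, _, hne⟩ := Finset.exists_ne_zero_of_sum_ne_zero h
    have h1 : MvPowerSeries.coeff d f ≠ 0 := fun h0 => hne (by rw [h0, zero_mul])
    have h2 : MvPowerSeries.coeff m (∏ i, g i ^ d i) ≠ 0 :=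
      fun h0 => hne (by rw [h0, mul_zero])
    obtain ⟨j, hj⟩ := (hf d).2 h1
    obtain ⟨k, hk⟩ := (key d m).2 h2
    exact ⟨j + k, by rw [hk, hj, add_mul]; ring⟩

lemma map_msubst {σ τ : Type*} [Fintype σ] [DecidableEq σ] {S : Type*} [CommRing S]
    (φ : R →+* S) (f : MvPowerSeries σ R) (g : σ → MvPowerSeries τ R) :
    MvPowerSeries.map φ (msubst f g) =
      msubst (MvPowerSeries.map φ f) (fun i => MvPowerSeries.map φ (g i)) := by
  funext m
  have : MvPowerSeries.map φ (msubst f g) m =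
      φ (MvPowerSeries.coeff m (msubst f g)) := rfl
  rw [this]
  show _ = ∑ d ∈ _, MvPowerSeries.coeff d (MvPowerSeries.map φ f) *
      MvPowerSeries.coeff m (∏ i, (MvPowerSeries.map φ (g i)) ^ d i)
  have hsum : MvPowerSeries.coeff m (msubst f g) =
      ∑ d ∈ Finset.Iic (Finsupp.equivFunOnFinite.symm (fun _ : σ => deg m)),
        MvPowerSeries.coeff d f * MvPowerSeries.coeff m (∏ i, g i ^ d i) := rfl
  rw [hsum, map_sum]
  refine Finset.sum_congr rfl fun d _ => ?_
  rw [map_mul, MvPowerSeries.coeff_map]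
  congr 1
  have : ∏ i, (MvPowerSeries.map φ (g i)) ^ d i =
      MvPowerSeries.map φ (∏ i, g i ^ d i) := by
    rw [map_prod]
    exact Finset.prod_congr rfl fun i _ => (map_pow _ _ _).symm
  rw [this, MvPowerSeries.coeff_map]

lemma cc_eq {R : Type*} [CommRing R] (x : PowerSeries R) :
    PowerSeries.constantCoeff x = MvPowerSeries.coeff 0 x := by
  rw [MvPowerSeries.coeff_zero_eq_constantCoeff]; rfl

lemma lacunary_map {σ : Type*} {S : Type*} [CommRing S] (φ : R →+* S)
    {f : MvPowerSeries σ R} (hf : Lacunary p f) :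
    Lacunary p (MvPowerSeries.map φ f) := by
  intro m hm
  rw [MvPowerSeries.coeff_map] at hm
  exact hf m fun h0 => hm (by rw [h0, map_zero])

end Stmt14Aux

/-- **Blowing up `(p-1)`-lacunary endomorphisms.**
Let `F` be a `(p-1)`-lacunary formal group law over `𝔬` and `λ` an element of an
`𝔬`-algebra `𝔒`.  For every `(p-1)`-lacunary endomorphism `g` of `F`, the `λ`-blowup
`g^{(λ)}` is an endomorphism of the blown-up formal group law `F^{(λ)}`, and
`g ↦ g^{(λ)}` is a ring homomorphism on `(p-1)`-lacunary endomorphisms — it sends the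
`F`-sum `F(g,h)` to the `F^{(λ)}`-sum and composition `g ∘ h` to composition — which
is injective provided `𝔬` embeds in `𝔒` and `λ` is a nonzerodivisor of `𝔒`. -/
theorem stmt_14 (p : ℕ) [Fact p.Prime]
    (O : Type*) [CommRing O] (F : MvPowerSeries (Fin 2) O)
    (hF : IsFormalGroupLaw F) (hlac : Lacunary p F)
    (O' : Type*) [CommRing O'] [Algebra O O'] (lam : O')
    (Flam : MvPowerSeries (Fin 2) O')
    (hFlam : Flam = blowup p lam (MvPowerSeries.map (algebraMap O O') F)) :
    -- blowups of lacunary endomorphisms are endomorphisms of the blown-up group law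
    (∀ g : PowerSeries O, Lacunary p g → IsEndoOf g F →
      IsEndoOf (blowup p lam (PowerSeries.map (algebraMap O O') g)) Flam) ∧
    -- `g ↦ g^{(λ)}` is additive for the formal group additions
    (∀ g h : PowerSeries O, Lacunary p g → IsEndoOf g F → Lacunary p h → IsEndoOf h F →
      blowup p lam (PowerSeries.map (algebraMap O O') (msubst F ![g, h])) =
        msubst Flam ![blowup p lam (PowerSeries.map (algebraMap O O') g),
          blowup p lam (PowerSeries.map (algebraMap O O') h)]) ∧
    -- `g ↦ g^{(λ)}` is multiplicative for composition
    (∀ g h : PowerSeries O, Lacunary p g → IsEndoOf g F → Lacunary p h → IsEndoOf h F →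
      blowup p lam (PowerSeries.map (algebraMap O O') (scomp g h)) =
        scomp (blowup p lam (PowerSeries.map (algebraMap O O') g))
          (blowup p lam (PowerSeries.map (algebraMap O O') h))) ∧
    -- injectivity when `λ` is a nonzerodivisor
    (Function.Injective (algebraMap O O') → lam ∈ nonZeroDivisors O' →
      ∀ g h : PowerSeries O, Lacunary p g → IsEndoOf g F → Lacunary p h → IsEndoOf h F →
        blowup p lam (PowerSeries.map (algebraMap O O') g) =
          blowup p lam (PowerSeries.map (algebraMap O O') h) → g = h) := by
  classical
  open Stmt14Aux in
  have hp2 : 2 ≤ p := (Fact.out : p.Prime).two_le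
  set φ := algebraMap O O' with hφ
  have hmapeq : PowerSeries.map φ = MvPowerSeries.map φ := rfl
  set FF := MvPowerSeries.map φ F with hFF
  have hFlac : Lacunary p FF := Stmt14Aux.lacunary_map φ hlac
  subst hFlam
  -- family beta lemmas
  have fam2 : ∀ (u v : MvPowerSeries (Fin 2) O),
      (fun i : Fin 2 => MvPowerSeries.map φ ((![u, v] : Fin 2 → _) i)) =
        ![MvPowerSeries.map φ u, MvPowerSeries.map φ v] := by
    intro u v
    funext i
    fin_cases i <;> rfl
  refine ⟨?_, ?_, ?_, ?_⟩
  · -- endomorphism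
    intro g hg hend
    set G := MvPowerSeries.map φ g with hG
    have hGlac : Lacunary p G := Stmt14Aux.lacunary_map φ hg
    rw [hmapeq, ← hG]
    constructor
    · -- constant coefficient
      rw [Stmt14Aux.cc_eq]
      have h0 : MvPowerSeries.coeff 0 G = 0 := by
        rw [hG, MvPowerSeries.coeff_map, ← Stmt14Aux.cc_eq g, hend.1, map_zero]
      show lam ^ ((((0 : Unit →₀ ℕ).sum fun _ v => v) - 1) / (p - 1)) *
          MvPowerSeries.coeff 0 G = 0
      rw [h0, mul_zero]
    · -- main identity
      set A : Fin 2 → MvPowerSeries (Fin 2) O' :=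
        fun i => msubst G (fun _ : Unit => (X i : MvPowerSeries (Fin 2) O')) with hA
      have hmA : ∀ i : Fin 2, Stmt14Aux.Matched p lam 1 (A i)
          (msubst (blowup p lam G) (fun _ : Unit => (X i : MvPowerSeries (Fin 2) O'))) :=
        fun i => Stmt14Aux.matched_msubst hp2 (Stmt14Aux.lacunary_matched hGlac)
          (fun _ => Stmt14Aux.matched_X i)
      have hAlac : ∀ i : Fin 2, Lacunary p (A i) :=
        fun i => Stmt14Aux.matched_lacunary (hmA i)
      have hstep : msubst G (fun _ : Unit => FF) = msubst FF ![A 0, A 1] := by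
        have h2 := congrArg (MvPowerSeries.map φ) hend.2
        rw [Stmt14Aux.map_msubst, Stmt14Aux.map_msubst] at h2
        have hfam1 : (fun i : Unit => MvPowerSeries.map φ
            ((fun _ : Unit => F) i)) = (fun _ : Unit => FF) := rfl
        rw [hfam1] at h2
        rw [fam2] at h2
        have hXi : ∀ i : Fin 2, MvPowerSeries.map φ
            (msubst g (fun _ : Unit => (X i : MvPowerSeries (Fin 2) O))) = A i := by
          intro i
          rw [Stmt14Aux.map_msubst]
          have : (fun u : Unit => MvPowerSeries.map φ
              ((fun _ : Unit => (X i : MvPowerSeries (Fin 2) O)) u)) =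
              (fun _ : Unit => (X i : MvPowerSeries (Fin 2) O')) := by
            funext u
            exact MvPowerSeries.map_X φ i
          rw [this]
        rw [hXi 0, hXi 1] at h2
        exact h2
      have hmain : Stmt14Aux.Matched p lam 1 (msubst G (fun _ : Unit => FF))
          (msubst (blowup p lam G) (fun _ : Unit => blowup p lam FF)) :=
        Stmt14Aux.matched_msubst hp2 (Stmt14Aux.lacunary_matched hGlac)
          (fun _ => Stmt14Aux.lacunary_matched hFlac)
      have hL : msubst (blowup p lam G) (fun _ : Unit => blowup p lam FF) =
          blowup p lam (msubst G (fun _ : Unit => FF)) :=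
        Stmt14Aux.matched_right_eq hmain
      have hRm : Stmt14Aux.Matched p lam 1 (msubst FF ![A 0, A 1])
          (msubst (blowup p lam FF)
            (fun i : Fin 2 => blowup p lam ((![A 0, A 1] : Fin 2 → _) i))) := by
        refine Stmt14Aux.matched_msubst hp2 (Stmt14Aux.lacunary_matched hFlac) ?_
        intro i
        fin_cases i
        · exact Stmt14Aux.lacunary_matched (hAlac 0)
        · exact Stmt14Aux.lacunary_matched (hAlac 1)
      have hfam3 : (fun i : Fin 2 => blowup p lam ((![A 0, A 1] : Fin 2 → _) i)) =
          ![blowup p lam (A 0), blowup p lam (A 1)] := by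
        funext i
        fin_cases i <;> rfl
      rw [hfam3] at hRm
      have hR : msubst (blowup p lam FF)
          ![blowup p lam (A 0), blowup p lam (A 1)] =
          blowup p lam (msubst FF ![A 0, A 1]) :=
        Stmt14Aux.matched_right_eq hRm
      rw [hL]
      rw [Stmt14Aux.matched_right_eq (hmA 0), Stmt14Aux.matched_right_eq (hmA 1)]
      rw [hR, hstep]
  · -- additivity
    intro g h hg hgend hh hhend
    rw [hmapeq]
    set G := MvPowerSeries.map φ g with hG
    set H := MvPowerSeries.map φ h with hH
    have hGlac : Lacunary p G := Stmt14Aux.lacunary_map φ hg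
    have hHlac : Lacunary p H := Stmt14Aux.lacunary_map φ hh
    have h1 : MvPowerSeries.map φ (msubst F ![g, h]) = msubst FF ![G, H] := by
      rw [Stmt14Aux.map_msubst]
      have : (fun i : Fin 2 => MvPowerSeries.map φ ((![g, h] : Fin 2 → _) i)) =
          ![G, H] := by
        funext i
        fin_cases i <;> rfl
      rw [this]
    rw [h1]
    have hm : Stmt14Aux.Matched p lam 1 (msubst FF ![G, H])
        (msubst (blowup p lam FF)
          (fun i : Fin 2 => blowup p lam ((![G, H] : Fin 2 → _) i))) := by
      refine Stmt14Aux.matched_msubst hp2 (Stmt14Aux.lacunary_matched hFlac) ?_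
      intro i
      fin_cases i
      · exact Stmt14Aux.lacunary_matched hGlac
      · exact Stmt14Aux.lacunary_matched hHlac
    have hfam : (fun i : Fin 2 => blowup p lam ((![G, H] : Fin 2 → _) i)) =
        ![blowup p lam G, blowup p lam H] := by
      funext i
      fin_cases i <;> rfl
    rw [hfam] at hm
    exact (Stmt14Aux.matched_right_eq hm).symm
  · -- composition
    intro g h hg hgend hh hhend
    rw [hmapeq]
    set G := MvPowerSeries.map φ g with hG
    set H := MvPowerSeries.map φ h with hH
    have hGlac : Lacunary p G := Stmt14Aux.lacunary_map φ hg
    have hHlac : Lacunary p H := Stmt14Aux.lacunary_map φ hh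
    have h1 : MvPowerSeries.map φ (scomp g h) = msubst G (fun _ : Unit => H) := by
      rw [scomp, Stmt14Aux.map_msubst]
    rw [h1]
    have hm : Stmt14Aux.Matched p lam 1 (msubst G (fun _ : Unit => H))
        (msubst (blowup p lam G) (fun _ : Unit => blowup p lam H)) :=
      Stmt14Aux.matched_msubst hp2 (Stmt14Aux.lacunary_matched hGlac)
        (fun _ => Stmt14Aux.lacunary_matched hHlac)
    exact (Stmt14Aux.matched_right_eq hm).symm
  · -- injectivity
    intro hinj hlam g h hg hgend hh hhend heq
    funext m
    have := congrFun heq m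
    show MvPowerSeries.coeff m g = MvPowerSeries.coeff m h
    have h2 : lam ^ (((m.sum fun _ v => v) - 1) / (p - 1)) *
          MvPowerSeries.coeff m (MvPowerSeries.map φ g) =
        lam ^ (((m.sum fun _ v => v) - 1) / (p - 1)) *
          MvPowerSeries.coeff m (MvPowerSeries.map φ h) := this
    rw [mul_cancel_left_mem_nonZeroDivisors (pow_mem hlam _)] at h2
    rw [MvPowerSeries.coeff_map, MvPowerSeries.coeff_map] at h2
    exact hinj h2
end
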